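/- (Theorem 1, ASL-tuple form.) Assume the continuous MPSP setting, and additionally that f_m(x) > 0 for every x > 0 and every m ∈ M. Let (C*, n*) be an equal-finish point (so necessarily n*_m > 0 for all m). Then the single-tuple plan assigning to each project m the one tuple (n*_m, 0, L_m) is a feasible ASL-tuple plan with makespan C*, and every feasible ASL-tuple plan has makespan at least C*. In particular, the optimal (relaxed) ASL-tuple plan executes every project with the constant allocation n*_m from time 0 until the common completion time C*. -/

import Mathlib

open scoped Classical

/-- The execution interval of an ASL-tuple `p = (n, s, l)` of a project with
speed function `fm`: the open interval `(s, s + l / fm n)`, where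
`l / fm n` is the execution time of the tuple. -/
def tupleInterval (fm : ℝ → ℝ) (p : ℝ × ℝ × ℝ) : Set ℝ :=
  Set.Ioo p.2.1 (p.2.1 + p.2.2 / fm p.1)

/-- A feasible ASL-tuple plan: each project `m` gets a finite set `P m` of
triples `(n, s, l)` with `n > 0`, `s ≥ 0`, `l > 0`; at every time the total
allocation of active tuples is at most `N` (capacity); intervals of distinct
tuples of the same project are disjoint (no self-overlap); and the layer counts
of the tuples of each project sum to its workload (completeness). -/
def FeasiblePlan {M : Type*} [Fintype M] (L : M → ℝ) (f : M → ℝ → ℝ) (N : ℝ)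
    (P : M → Finset (ℝ × ℝ × ℝ)) : Prop :=
  (∀ m, ∀ p ∈ P m, 0 < p.1 ∧ 0 ≤ p.2.1 ∧ 0 < p.2.2) ∧
  (∀ t : ℝ, ∑ m, ∑ p ∈ (P m).filter (fun p => t ∈ tupleInterval (f m) p), p.1 ≤ N) ∧
  (∀ m, ∀ p₁ ∈ P m, ∀ p₂ ∈ P m, p₁ ≠ p₂ →
    Disjoint (tupleInterval (f m) p₁) (tupleInterval (f m) p₂)) ∧
  (∀ m, ∑ p ∈ P m, p.2.2 = L m)

open MeasureTheory in
lemma sum_mul_length_le {ι : Type*} (S : Finset ι) (a b c : ι → ℝ) (B K : ℝ)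
    (hB : 0 ≤ B) (hK : 0 ≤ K)
    (hsub : ∀ i ∈ S, Set.Ioo (a i) (b i) ⊆ Set.Ioo 0 B)
    (hab : ∀ i ∈ S, a i ≤ b i)
    (hc : ∀ i ∈ S, 0 ≤ c i)
    (hcap : ∀ t : ℝ, ∑ i ∈ S.filter (fun i => t ∈ Set.Ioo (a i) (b i)), c i ≤ K) :
    ∑ i ∈ S, c i * (b i - a i) ≤ K * B := by
  set g : ℝ → ℝ := fun t => ∑ i ∈ S, (Set.Ioo (a i) (b i)).indicator (fun _ => c i) t with hg
  have hint : ∀ i ∈ S, IntegrableOn ((Set.Ioo (a i) (b i)).indicator (fun _ => c i))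
      (Set.Ioo 0 B) := by
    intro i hi
    refine (integrable_indicator_iff measurableSet_Ioo).2 ?_
    refine integrableOn_const ?_ (by simp)
    rw [Measure.restrict_apply measurableSet_Ioo]
    exact (lt_of_le_of_lt (measure_mono Set.inter_subset_left) measure_Ioo_lt_top).ne
  have h1 : ∀ i ∈ S, ∫ t in Set.Ioo 0 B, (Set.Ioo (a i) (b i)).indicator (fun _ => c i) t
      = c i * (b i - a i) := by
    intro i hi
    rw [setIntegral_indicator measurableSet_Ioo, Set.inter_eq_right.2 (hsub i hi),
      setIntegral_const, Real.volume_real_Ioo_of_le (hab i hi),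
      smul_eq_mul]
    ring
  have hgi : IntegrableOn g (Set.Ioo 0 B) := integrable_finset_sum _ hint
  have h2 : ∫ t in Set.Ioo 0 B, g t = ∑ i ∈ S, c i * (b i - a i) := by
    rw [hg]
    rw [integral_finset_sum _ hint]
    exact Finset.sum_congr rfl h1
  have h3 : ∀ t, g t ≤ K := by
    intro t
    rw [hg]
    simp only
    rw [Finset.sum_indicator_eq_sum_filter]
    exact hcap t
  calc ∑ i ∈ S, c i * (b i - a i) = ∫ t in Set.Ioo 0 B, g t := h2.symm
    _ ≤ ∫ _t in Set.Ioo 0 B, K := by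
        refine setIntegral_mono_on hgi (integrableOn_const (by simp) (by simp)) measurableSet_Ioo ?_
        intro t _; exact h3 t
    _ = K * B := by
        rw [setIntegral_const, Real.volume_real_Ioo_of_le (by linarith)]
        simp [mul_comm]

lemma concave_nonneg_mono {f : ℝ → ℝ} (hconc : ConcaveOn ℝ (Set.Ici 0) f)
    (hnn : ∀ x : ℝ, 0 ≤ x → 0 ≤ f x) {x y : ℝ} (hx : 0 ≤ x) (hxy : x ≤ y) :
    f x ≤ f y := by
  by_contra h
  push_neg at h
  have hlt : x < y := lt_of_le_of_ne hxy (by rintro rfl; exact lt_irrefl _ h)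
  have hfx : 0 ≤ f x := hnn x hx
  have hd0 : 0 < f x - f y := by linarith
  set d : ℝ := f x - f y with hd
  set μ : ℝ := d / (f x + d) with hμ
  have hden : 0 < f x + d := by linarith
  have hμ0 : 0 < μ := div_pos hd0 hden
  have hμ1 : μ ≤ 1 := by rw [hμ, div_le_one hden]; linarith
  have hμd : μ * (f x + d) = d := by rw [hμ]; field_simp
  set z : ℝ := x + (y - x) / μ with hz
  have hzy : y ≤ z := by
    rw [hz]
    have : y - x ≤ (y - x) / μ := by
      rw [le_div_iff₀ hμ0]; nlinarith
    linarith
  have hz0 : 0 ≤ z := le_trans (le_trans hx hxy) hzy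
  have hcomb := hconc.2 (Set.mem_Ici.2 hx) (Set.mem_Ici.2 hz0)
    (by linarith : (0:ℝ) ≤ 1 - μ) hμ0.le (by ring)
  have hby : (1 - μ) • x + μ • z = y := by
    simp only [smul_eq_mul, hz]
    field_simp
    ring
  rw [hby] at hcomb
  simp only [smul_eq_mul] at hcomb
  have hfz : 0 ≤ f z := hnn z hz0
  nlinarith [hcomb, hfz, hμd, mul_nonneg hμ0.le hfz]

/-- Theorem 1 (ASL-tuple form): for an equal-finish point `(Cstar, nstar)` (with
positive speeds at positive allocations), the single-tuple plan giving every
project `m` the one tuple `(nstar m, 0, L m)` is feasible, every one of its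
tuples finishes exactly at time `Cstar` (so its makespan is `Cstar`), and every
feasible ASL-tuple plan has makespan at least `Cstar`. -/
theorem mpsp_asl_optimality {M : Type*} [Fintype M] [Nonempty M]
    (L : M → ℝ) (hL : ∀ m, 0 < L m)
    (f : M → ℝ → ℝ)
    (hconc : ∀ m, ConcaveOn ℝ (Set.Ici 0) (f m))
    (hcont : ∀ m, ContinuousOn (f m) (Set.Ici 0))
    (hnonneg : ∀ m, ∀ x : ℝ, 0 ≤ x → 0 ≤ f m x)
    (hzero : ∀ m, f m 0 = 0)
    (hpos : ∀ m, ∀ x : ℝ, 0 < x → 0 < f m x)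
    (N : ℝ) (hN : 0 < N)
    (Cstar : ℝ) (nstar : M → ℝ) (hCstar : 0 < Cstar)
    (hnstar_nonneg : ∀ m, 0 ≤ nstar m)
    (hfinish : ∀ m, f m (nstar m) * Cstar = L m)
    (hsum : ∑ m, nstar m = N) :
    FeasiblePlan L f N (fun m => {(nstar m, 0, L m)}) ∧
    (∀ m, (0 : ℝ) + L m / f m (nstar m) = Cstar) ∧
    (∀ P : M → Finset (ℝ × ℝ × ℝ), FeasiblePlan L f N P →
      ∀ B : ℝ, (∀ m, ∀ p ∈ P m, p.2.1 + p.2.2 / f m p.1 ≤ B) → Cstar ≤ B) := by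
  -- nstar m is positive
  have hnpos : ∀ m, 0 < nstar m := by
    intro m
    rcases lt_or_eq_of_le (hnstar_nonneg m) with h | h
    · exact h
    · exfalso
      have := hfinish m
      rw [← h, hzero m, zero_mul] at this
      exact absurd this.symm (ne_of_gt (hL m))
  have hfpos : ∀ m, 0 < f m (nstar m) := fun m => hpos m _ (hnpos m)
  refine ⟨⟨?_, ?_, ?_, ?_⟩, ?_, ?_⟩
  · intro m p hp
    simp only [Finset.mem_singleton] at hp
    subst hp
    exact ⟨hnpos m, le_refl 0, hL m⟩
  · intro t
    rw [← hsum]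
    refine Finset.sum_le_sum (fun m _ => ?_)
    calc ∑ p ∈ ({(nstar m, 0, L m)} : Finset (ℝ × ℝ × ℝ)).filter
          (fun p => t ∈ tupleInterval (f m) p), p.1
        ≤ ∑ p ∈ ({(nstar m, 0, L m)} : Finset (ℝ × ℝ × ℝ)), p.1 := by
          refine Finset.sum_le_sum_of_subset_of_nonneg (Finset.filter_subset _ _) ?_
          intro p hp _
          simp only [Finset.mem_singleton] at hp
          subst hp
          exact (hnpos m).le
      _ = nstar m := by simp
  · intro m p₁ h₁ p₂ h₂ hne
    simp only [Finset.mem_singleton] at h₁ h₂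
    subst h₁; subst h₂
    exact absurd rfl hne
  · intro m; simp
  · intro m
    rw [zero_add, ← hfinish m, mul_comm, mul_div_assoc, div_self (ne_of_gt (hfpos m)), mul_one]
  -- optimality
  intro P hP B hB
  obtain ⟨hP1, hP2, hP3, hP4⟩ := hP
  by_contra hBC
  push_neg at hBC
  -- basic facts
  have htpos : ∀ m, ∀ p ∈ P m, 0 < p.2.2 / f m p.1 := fun m p hp =>
    div_pos (hP1 m p hp).2.2 (hpos m _ (hP1 m p hp).1)
  have hPne : ∀ m, (P m).Nonempty := by
    intro m
    rcases (P m).eq_empty_or_nonempty with h | h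
    · exfalso
      have := hP4 m
      rw [h, Finset.sum_empty] at this
      exact absurd this.symm (ne_of_gt (hL m))
    · exact h
  have hB0 : 0 < B := by
    obtain ⟨m⟩ := ‹Nonempty M›
    obtain ⟨p, hp⟩ := hPne m
    have := hB m p hp
    have h1 := (hP1 m p hp).2.1
    have h2 := htpos m p hp
    linarith
  have hsubint : ∀ m, ∀ p ∈ P m, tupleInterval (f m) p ⊆ Set.Ioo 0 B := by
    intro m p hp t ht
    obtain ⟨ht1, ht2⟩ := ht
    exact ⟨lt_of_le_of_lt (hP1 m p hp).2.1 ht1, lt_of_lt_of_le ht2 (hB m p hp)⟩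
  have hablen : ∀ m, ∀ p : ℝ × ℝ × ℝ, (p.2.1 + p.2.2 / f m p.1) - p.2.1 = p.2.2 / f m p.1 := by
    intro m p; ring
  -- Step A: capacity integral
  have hcapA : ∑ m, ∑ p ∈ P m, p.1 * (p.2.2 / f m p.1) ≤ N * B := by
    have := sum_mul_length_le (Finset.univ.sigma P)
      (fun i => i.2.2.1) (fun i => i.2.2.1 + i.2.2.2 / f i.1 i.2.1) (fun i => i.2.1) B N
      hB0.le hN.le
      (by
        rintro ⟨m, p⟩ hi
        simp only [Finset.mem_sigma, Finset.mem_univ, true_and] at hi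
        exact hsubint m p hi)
      (by
        rintro ⟨m, p⟩ hi
        simp only [Finset.mem_sigma, Finset.mem_univ, true_and] at hi
        have := htpos m p hi
        simp only
        linarith)
      (by
        rintro ⟨m, p⟩ hi
        simp only [Finset.mem_sigma, Finset.mem_univ, true_and] at hi
        exact (hP1 m p hi).1.le)
      (by
        intro t
        have h := hP2 t
        calc ∑ i ∈ (Finset.univ.sigma P).filter
              (fun i => t ∈ Set.Ioo i.2.2.1 (i.2.2.1 + i.2.2.2 / f i.1 i.2.1)), i.2.1
            = ∑ i ∈ Finset.univ.sigma P,
              if t ∈ Set.Ioo i.2.2.1 (i.2.2.1 + i.2.2.2 / f i.1 i.2.1) then i.2.1 else 0 :=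
              Finset.sum_filter _ _
          _ = ∑ m, ∑ p ∈ P m, if t ∈ tupleInterval (f m) p then p.1 else 0 := by
              rw [Finset.sum_sigma]
              exact Finset.sum_congr rfl fun m _ => Finset.sum_congr rfl fun p _ =>
                if_congr Iff.rfl rfl rfl
          _ = ∑ m, ∑ p ∈ (P m).filter (fun p => t ∈ tupleInterval (f m) p), p.1 := by
              refine Finset.sum_congr rfl (fun m _ => ?_)
              exact (Finset.sum_filter _ _).symm
          _ ≤ N := h)
    calc ∑ m, ∑ p ∈ P m, p.1 * (p.2.2 / f m p.1)
        = ∑ i ∈ Finset.univ.sigma P, i.2.1 * ((i.2.2.1 + i.2.2.2 / f i.1 i.2.1) - i.2.2.1) := by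
          rw [Finset.sum_sigma]
          refine Finset.sum_congr rfl (fun m _ => Finset.sum_congr rfl (fun p _ => ?_))
          rw [hablen m p]
      _ ≤ N * B := this
  -- Step B: per-project total time ≤ B
  have htimeB : ∀ m, ∑ p ∈ P m, p.2.2 / f m p.1 ≤ B := by
    intro m
    have := sum_mul_length_le (P m)
      (fun p => p.2.1) (fun p => p.2.1 + p.2.2 / f m p.1) (fun _ => (1:ℝ)) B 1
      hB0.le zero_le_one
      (fun p hp => hsubint m p hp)
      (fun p hp => by have := htpos m p hp; linarith)
      (fun p _ => zero_le_one)
      (by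
        intro t
        rw [Finset.sum_const, nsmul_eq_mul, mul_one]
        rw [Nat.cast_le_one]
        refine Finset.card_le_one.2 ?_
        intro p₁ h₁ p₂ h₂
        simp only [Finset.mem_filter] at h₁ h₂
        by_contra hne
        exact Set.disjoint_left.1 (hP3 m p₁ h₁.1 p₂ h₂.1 hne) h₁.2 h₂.2)
    calc ∑ p ∈ P m, p.2.2 / f m p.1
        = ∑ p ∈ P m, 1 * ((p.2.1 + p.2.2 / f m p.1) - p.2.1) := by
          refine Finset.sum_congr rfl (fun p _ => ?_)
          rw [hablen m p, one_mul]
      _ ≤ 1 * B := this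
      _ = B := one_mul B
  -- Step C: Jensen per project
  have hjensen : ∀ m, L m / B ≤ f m ((∑ p ∈ P m, p.1 * (p.2.2 / f m p.1)) / B) := by
    intro m
    set A : ℝ := ∑ p ∈ P m, p.1 * (p.2.2 / f m p.1) with hA
    set T : ℝ := ∑ p ∈ P m, p.2.2 / f m p.1 with hT
    have hT0 : 0 < T :=
      Finset.sum_pos (fun p hp => htpos m p hp) (hPne m)
    have hTB : T ≤ B := htimeB m
    have hA0 : 0 ≤ A :=
      Finset.sum_nonneg (fun p hp => mul_nonneg (hP1 m p hp).1.le (htpos m p hp).le)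
    -- centerMass Jensen
    have hcm := (hconc m).le_map_centerMass (t := P m) (w := fun p => p.2.2 / f m p.1)
      (p := fun p => p.1) (fun p hp => (htpos m p hp).le) (hT ▸ hT0)
      (fun p hp => Set.mem_Ici.2 (hP1 m p hp).1.le)
    rw [Finset.centerMass, Finset.centerMass] at hcm
    simp only [smul_eq_mul, Function.comp] at hcm
    have hsum1 : ∑ p ∈ P m, (p.2.2 / f m p.1) * p.1 = A := by
      rw [hA]; exact Finset.sum_congr rfl (fun p _ => mul_comm _ _)
    have hsum2 : ∑ p ∈ P m, (p.2.2 / f m p.1) * f m p.1 = L m := by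
      rw [← hP4 m]
      refine Finset.sum_congr rfl (fun p hp => ?_)
      rw [div_mul_cancel₀]
      exact ne_of_gt (hpos m _ (hP1 m p hp).1)
    rw [hsum1, hsum2, ← hT] at hcm
    -- two-point concavity: f(A/B) ≥ (T/B) f(A/T)
    have h2pt := (hconc m).2 (Set.mem_Ici.2 (by positivity : (0:ℝ) ≤ T⁻¹ * A))
      (Set.mem_Ici.2 (le_refl (0:ℝ)))
      (by positivity : (0:ℝ) ≤ T/B)
      (by
        rw [sub_nonneg, div_le_one hB0]
        exact hTB : (0:ℝ) ≤ 1 - T/B)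
      (by ring : T/B + (1 - T/B) = 1)
    simp only [smul_eq_mul, mul_zero, add_zero, hzero m] at h2pt
    have hTne : T ≠ 0 := ne_of_gt hT0
    have hBne : B ≠ 0 := ne_of_gt hB0
    have hpt : T / B * (T⁻¹ * A) = A / B := by
      rw [div_mul_eq_mul_div, ← mul_assoc, mul_inv_cancel₀ hTne, one_mul]
    rw [hpt] at h2pt
    have hfAT : L m / T ≤ f m (T⁻¹ * A) := by
      rw [div_eq_inv_mul]; exact hcm
    calc L m / B = T / B * (L m / T) := by
          rw [div_mul_div_comm, mul_comm T (L m), mul_div_mul_right _ _ hTne]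
      _ ≤ T / B * f m (T⁻¹ * A) := by
          refine mul_le_mul_of_nonneg_left hfAT (by positivity)
      _ ≤ f m (A / B) := by linarith [h2pt]
  -- Step D: A m > nstar m * B
  have hDm : ∀ m, nstar m * B < ∑ p ∈ P m, p.1 * (p.2.2 / f m p.1) := by
    intro m
    set A : ℝ := ∑ p ∈ P m, p.1 * (p.2.2 / f m p.1) with hA
    have hA0 : 0 ≤ A :=
      Finset.sum_nonneg (fun p hp => mul_nonneg (hP1 m p hp).1.le (htpos m p hp).le)
    have hfn : f m (nstar m) = L m / Cstar := by
      rw [← hfinish m, mul_div_assoc, div_self (ne_of_gt hCstar), mul_one]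
    have hstrict : f m (nstar m) < f m (A / B) := by
      refine lt_of_lt_of_le ?_ (hjensen m)
      rw [hfn]
      exact div_lt_div_of_pos_left (hL m) hB0 hBC
    by_contra hle
    push_neg at hle
    have : A / B ≤ nstar m := by
      rw [div_le_iff₀ hB0]
      exact hle
    exact absurd (concave_nonneg_mono (hconc m) (hnonneg m) (by positivity) this)
      (not_le_of_gt hstrict)
  -- Step E: contradiction
  have : N * B < N * B := by
    calc N * B = ∑ m, nstar m * B := by rw [← Finset.sum_mul, hsum]
      _ < ∑ m, ∑ p ∈ P m, p.1 * (p.2.2 / f m p.1) :=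
          Finset.sum_lt_sum_of_nonempty Finset.univ_nonempty (fun m _ => hDm m)
      _ ≤ N * B := hcapA
  exact lt_irrefl _ this
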